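/- Let κ > 0 and let I : (0,1) → [0,∞) be a concave continuous function. Define ᾱ_1 := 2^κ · sup_{0<s<1} I(s), and ᾱ_2 := sup_{0<s<1} [I(s)/(s(1−s))]·(s^{1/(κ−1)}+(1−s)^{1/(κ−1)})^{κ−1} if κ < 1; ᾱ_2 := 2·I(1/2) if κ = 1; ᾱ_2 := inf_{0<s<1} [I(s)/(s(1−s))]·(s^{1/(κ−1)}+(1−s)^{1/(κ−1)})^{κ−1} if κ > 1. Then ᾱ_1 = ᾱ_2 if and only if both ᾱ_1 = 2^κ · I(1/2) and ᾱ_2 = 2^κ · I(1/2) hold. Moreover, when κ ≤ 1, ᾱ_1 = ᾱ_2 if and only if ᾱ_1 = 2^κ · I(1/2), i.e. if and only if sup_{0<s<1} I(s) = I(1/2). -/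

import Mathlib

open Set

/-- The upper bound `ᾱ₁ = 2^κ ⬝ sup_{0<s<1} I(s)` of Theorem 1. -/
noncomputable def alphaBar1 (κ : ℝ) (I : ℝ → ℝ) : ℝ :=
  2 ^ κ * ⨆ s : Ioo (0 : ℝ) 1, I s

/-- The upper bound `ᾱ₂` of Theorem 2, defined by cases on `κ`. -/
noncomputable def alphaBar2 (κ : ℝ) (I : ℝ → ℝ) : ℝ :=
  if κ < 1 then
    ⨆ s : Ioo (0 : ℝ) 1, I s / ((s : ℝ) * (1 - (s : ℝ))) *
      ((s : ℝ) ^ (1 / (κ - 1)) + (1 - (s : ℝ)) ^ (1 / (κ - 1))) ^ (κ - 1)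
  else if κ = 1 then 2 * I (1 / 2)
  else
    ⨅ s : Ioo (0 : ℝ) 1, I s / ((s : ℝ) * (1 - (s : ℝ))) *
      ((s : ℝ) ^ (1 / (κ - 1)) + (1 - (s : ℝ)) ^ (1 / (κ - 1))) ^ (κ - 1)

open Real

lemma weight_lt {κ s : ℝ} (hκ0 : 0 < κ) (hκ1 : κ < 1) (hs0 : 0 < s) (hs1 : s < 1) (hne : s ≠ 1/2) :
    (s ^ (1/(κ-1)) + (1-s) ^ (1/(κ-1))) ^ (κ-1) < 2 ^ κ * (s * (1-s)) := by
  have hp0 : κ - 1 < 0 := by linarith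
  have hpne : κ - 1 ≠ 0 := ne_of_lt hp0
  set q : ℝ := 1 - κ with hq
  have hq0 : 0 < q := by simp [hq]; linarith
  have hq1 : q < 1 := by simp [hq]; linarith
  have h1s : 0 < 1 - s := by linarith
  set a : ℝ := 1/(κ-1) with ha
  have hu : 0 < s ^ a := Real.rpow_pos_of_pos hs0 a
  have hv : 0 < (1-s) ^ a := Real.rpow_pos_of_pos h1s a
  have hap : a * (κ-1) = 1 := one_div_mul_cancel hpne
  have haq : a * q = -1 := by
    rw [ha, hq]; field_simp; ring
  have huv : s ^ a ≠ (1-s) ^ a := by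
    intro h
    have h2 : (s ^ a) ^ (κ-1) = ((1-s) ^ a) ^ (κ-1) := by rw [h]
    rw [← Real.rpow_mul hs0.le, ← Real.rpow_mul h1s.le, hap, Real.rpow_one, Real.rpow_one] at h2
    apply hne; linarith
  have hsc := (Real.strictConcaveOn_rpow hq0 hq1).2 (Set.mem_Ici.2 hu.le)
    (Set.mem_Ici.2 hv.le) huv (by norm_num : (0:ℝ) < 1/2) (by norm_num : (0:ℝ) < 1/2)
    (by norm_num)
  simp only [smul_eq_mul] at hsc
  have huq : (s ^ a) ^ q = s⁻¹ := by
    rw [← Real.rpow_mul hs0.le, haq, Real.rpow_neg_one]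
  have hvq : ((1-s) ^ a) ^ q = (1-s)⁻¹ := by
    rw [← Real.rpow_mul h1s.le, haq, Real.rpow_neg_one]
  rw [huq, hvq] at hsc
  set w : ℝ := 1/2 * s ^ a + 1/2 * (1-s) ^ a with hw
  have hw0 : 0 < w := by positivity
  have hlhs : 1/2 * s⁻¹ + 1/2 * (1-s)⁻¹ = (2 * (s * (1-s)))⁻¹ := by
    field_simp; ring
  rw [hlhs] at hsc
  -- raise to 1/q
  have hD0 : 0 < 2 * (s * (1-s)) := by positivity
  have step2 : ((2 * (s * (1-s)))⁻¹) ^ (1/q) < w := by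
    have := Real.rpow_lt_rpow (by positivity) hsc (by positivity : 0 < 1/q)
    rwa [← Real.rpow_mul hw0.le, mul_one_div_cancel hq0.ne', Real.rpow_one] at this
  -- apply negative power
  have step3 : w ^ (κ-1) < (((2 * (s * (1-s)))⁻¹) ^ (1/q)) ^ (κ-1) :=
    Real.rpow_lt_rpow_of_neg (by positivity) step2 hp0
  have hqp : (1/q) * (κ-1) = -1 := by
    rw [hq]; field_simp; rw [div_eq_iff (by linarith : (0:ℝ) < 1 - κ).ne']; ring
  rw [← Real.rpow_mul (by positivity), hqp, Real.rpow_neg_one, inv_inv] at step3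
  have hfactor : s ^ a + (1-s) ^ a = 2 * w := by rw [hw]; ring
  calc (s ^ a + (1-s) ^ a) ^ (κ-1) = (2 * w) ^ (κ-1) := by rw [hfactor]
    _ = 2 ^ (κ-1) * w ^ (κ-1) := Real.mul_rpow (by norm_num) hw0.le
    _ < 2 ^ (κ-1) * (2 * (s * (1-s))) := by
        exact mul_lt_mul_of_pos_left step3 (Real.rpow_pos_of_pos two_pos _)
    _ = 2 ^ κ * (s * (1-s)) := by
        rw [show κ = (κ-1) + 1 by ring, Real.rpow_add two_pos, Real.rpow_one]; ring_nf

lemma weight_half {κ : ℝ} (hκ : κ ≠ 1) :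
    (((1:ℝ)/2) ^ (1/(κ-1)) + ((1:ℝ) - 1/2) ^ (1/(κ-1))) ^ (κ-1)
      = 2 ^ κ * (((1:ℝ)/2) * (1 - 1/2)) := by
  have h2 : (1:ℝ) - 1/2 = 1/2 := by norm_num
  have hp : κ - 1 ≠ 0 := sub_ne_zero.2 hκ
  have hhalf : (0:ℝ) ≤ 1/2 := by norm_num
  rw [h2, ← two_mul, Real.mul_rpow (by norm_num) (Real.rpow_nonneg hhalf _),
    ← Real.rpow_mul hhalf, one_div_mul_cancel hp, Real.rpow_one,
    show (2:ℝ)^(κ-1) = 2^κ / 2 from by rw [Real.rpow_sub two_pos, Real.rpow_one]]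
  ring

lemma weight_le {κ s : ℝ} (hκ0 : 0 < κ) (hκ1 : κ < 1) (hs0 : 0 < s) (hs1 : s < 1) :
    (s ^ (1/(κ-1)) + (1-s) ^ (1/(κ-1))) ^ (κ-1) ≤ 2 ^ κ * (s * (1-s)) := by
  rcases eq_or_ne s (1/2) with rfl | hne
  · exact le_of_eq (by simpa using weight_half (ne_of_lt hκ1))
  · exact (weight_lt hκ0 hκ1 hs0 hs1 hne).le

lemma weight_le_left {κ s : ℝ} (hκ1 : κ < 1) (hs0 : 0 < s) (h1s : 0 < 1 - s) :
    (s ^ (1/(κ-1)) + (1-s) ^ (1/(κ-1))) ^ (κ-1) ≤ s := by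
  have hp0 : κ - 1 ≤ 0 := by linarith
  have hpne : κ - 1 ≠ 0 := by intro h; rw [h] at hp0; linarith [hκ1]
  calc (s ^ (1/(κ-1)) + (1-s) ^ (1/(κ-1))) ^ (κ-1)
      ≤ (s ^ (1/(κ-1))) ^ (κ-1) := by
        apply Real.rpow_le_rpow_of_nonpos (Real.rpow_pos_of_pos hs0 _)
          (le_add_of_nonneg_right (Real.rpow_nonneg h1s.le _)) hp0
    _ = s := by
        rw [← Real.rpow_mul hs0.le, one_div_mul_cancel (sub_ne_zero.2 (ne_of_lt hκ1)), Real.rpow_one]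

lemma weight_le_right {κ s : ℝ} (hκ1 : κ < 1) (hs0 : 0 < s) (h1s : 0 < 1 - s) :
    (s ^ (1/(κ-1)) + (1-s) ^ (1/(κ-1))) ^ (κ-1) ≤ 1 - s := by
  have hp0 : κ - 1 ≤ 0 := by linarith
  calc (s ^ (1/(κ-1)) + (1-s) ^ (1/(κ-1))) ^ (κ-1)
      ≤ ((1-s) ^ (1/(κ-1))) ^ (κ-1) := by
        apply Real.rpow_le_rpow_of_nonpos (Real.rpow_pos_of_pos h1s _)
          (le_add_of_nonneg_left (Real.rpow_nonneg hs0.le _)) hp0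
    _ = 1 - s := by
        rw [← Real.rpow_mul h1s.le, one_div_mul_cancel (sub_ne_zero.2 (ne_of_lt hκ1)), Real.rpow_one]

lemma I_le_two {I : ℝ → ℝ} (hconc : ConcaveOn ℝ (Ioo 0 1) I)
    (hnn : ∀ s ∈ Ioo (0:ℝ) 1, 0 ≤ I s) {s : ℝ} (hs : s ∈ Ioo (0:ℝ) 1) :
    I s ≤ 2 * I (1/2) := by
  have hs' : (1 - s) ∈ Ioo (0:ℝ) 1 := ⟨by linarith [hs.2], by linarith [hs.1]⟩
  have h := hconc.2 hs hs' (by norm_num : (0:ℝ) ≤ 1/2) (by norm_num : (0:ℝ) ≤ 1/2) (by norm_num)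
  simp only [smul_eq_mul] at h
  have hmid : (1/2 : ℝ) * s + (1/2 : ℝ) * (1-s) = 1/2 := by ring
  rw [hmid] at h
  have := hnn _ hs'
  linarith

/-- The equality characterization of Theorem 3: `ᾱ₁ = ᾱ₂` iff both `ᾱ₁ = 2^κ I(1/2)` and
`ᾱ₂ = 2^κ I(1/2)`; and when `κ ≤ 1`, `ᾱ₁ = ᾱ₂` iff `ᾱ₁ = 2^κ I(1/2)` iff
`sup_{0<s<1} I(s) = I(1/2)`. -/
theorem stmt3 (κ : ℝ) (hκ : 0 < κ) (I : ℝ → ℝ)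
    (hI_concave : ConcaveOn ℝ (Ioo 0 1) I)
    (hI_cont : ContinuousOn I (Ioo 0 1))
    (hI_nonneg : ∀ s ∈ Ioo (0 : ℝ) 1, 0 ≤ I s) :
    (alphaBar1 κ I = alphaBar2 κ I ↔
      (alphaBar1 κ I = 2 ^ κ * I (1 / 2) ∧ alphaBar2 κ I = 2 ^ κ * I (1 / 2))) ∧
    (κ ≤ 1 →
      ((alphaBar1 κ I = alphaBar2 κ I ↔ alphaBar1 κ I = 2 ^ κ * I (1 / 2)) ∧
       (alphaBar1 κ I = 2 ^ κ * I (1 / 2) ↔ (⨆ s : Ioo (0 : ℝ) 1, I s) = I (1 / 2)))) := by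
  have hhalf : (1/2 : ℝ) ∈ Ioo (0:ℝ) 1 := by constructor <;> norm_num
  haveI : Nonempty (Ioo (0:ℝ) 1) := ⟨⟨1/2, hhalf⟩⟩
  have h2κ : (0:ℝ) < 2 ^ κ := Real.rpow_pos_of_pos two_pos κ
  set c := I (1/2) with hc
  have hc0 : 0 ≤ c := hI_nonneg _ hhalf
  have hIle : ∀ t : Ioo (0:ℝ) 1, I t ≤ 2 * c :=
    fun t => I_le_two hI_concave hI_nonneg t.2
  have hBdd : BddAbove (Set.range fun t : Ioo (0:ℝ) 1 => I t) :=
    ⟨2*c, by rintro _ ⟨t, rfl⟩; exact hIle t⟩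
  set M := ⨆ t : Ioo (0:ℝ) 1, I t with hM
  have hcM : c ≤ M := le_ciSup hBdd ⟨1/2, hhalf⟩
  have hM0 : 0 ≤ M := hc0.trans hcM
  have hα1 : alphaBar1 κ I = 2 ^ κ * M := rfl
  have hcancel : (2:ℝ)^κ * M = 2^κ * c ↔ M = c :=
    ⟨fun h => mul_left_cancel₀ h2κ.ne' h, fun h => by rw [h]⟩
  rcases lt_trichotomy κ 1 with hκ1 | hκ1 | hκ1
  · -- κ < 1
    set F : Ioo (0:ℝ) 1 → ℝ := fun t => I t / ((t:ℝ) * (1 - (t:ℝ))) *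
      ((t : ℝ) ^ (1 / (κ - 1)) + (1 - (t : ℝ)) ^ (1 / (κ - 1))) ^ (κ - 1) with hF
    have hα2 : alphaBar2 κ I = ⨆ t, F t := by rw [alphaBar2, if_pos hκ1]
    have hD : ∀ t : Ioo (0:ℝ) 1, 0 < (t:ℝ) * (1 - (t:ℝ)) :=
      fun t => mul_pos t.2.1 (by linarith [t.2.2])
    have hF_le : ∀ t : Ioo (0:ℝ) 1, F t ≤ 2^κ * I t := by
      intro t
      have hg := weight_le hκ hκ1 t.2.1 t.2.2
      calc F t ≤ I t / ((t:ℝ) * (1 - (t:ℝ))) * (2^κ * ((t:ℝ) * (1 - (t:ℝ)))) :=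
            mul_le_mul_of_nonneg_left hg (div_nonneg (hI_nonneg _ t.2) (hD t).le)
        _ = 2^κ * I t := by
          rw [mul_left_comm (I t / ((t:ℝ) * (1 - (t:ℝ)))), div_mul_cancel₀ _ (hD t).ne']
    have hF_le_M : ∀ t : Ioo (0:ℝ) 1, F t ≤ 2^κ * M :=
      fun t => (hF_le t).trans (mul_le_mul_of_nonneg_left (le_ciSup hBdd t) h2κ.le)
    have hFBdd : BddAbove (Set.range F) := ⟨2^κ * M, by rintro _ ⟨t, rfl⟩; exact hF_le_M t⟩
    have hα2_le : (⨆ t, F t) ≤ 2^κ * M := ciSup_le hF_le_M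
    have hFhalf : F ⟨1/2, hhalf⟩ = 2^κ * c := by
      show I (1/2) / ((1/2 : ℝ) * (1 - 1/2)) * _ = _
      rw [weight_half (ne_of_lt hκ1)]
      rw [← hc]; field_simp
    -- forward key: sup F = 2^κ M → M = c
    have hMc_of_eq : (⨆ t, F t) = 2^κ * M → M = c := by
      intro hsup
      by_contra hne
      have hcM' : c < M := lt_of_le_of_ne hcM (Ne.symm hne)
      have hM0' : 0 < M := hc0.trans_lt hcM'
      -- continuity at 1/2
      have hcont : ContinuousAt I (1/2) :=
        hI_cont.continuousAt (Ioo_mem_nhds (by norm_num) (by norm_num))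
      have hnb : I ⁻¹' (Iio ((M+c)/2)) ∈ nhds (1/2 : ℝ) :=
        hcont.preimage_mem_nhds (Iio_mem_nhds (by rw [← hc]; linarith))
      obtain ⟨ε₂, hε₂0, hball⟩ := Metric.mem_nhds_iff.1 hnb
      set b := (2:ℝ) ^ (-κ) with hb
      have hb0 : 0 < b := Real.rpow_pos_of_pos two_pos _
      have hb1 : b < 1 := Real.rpow_lt_one_of_one_lt_of_neg one_lt_two (by linarith)
      have hbhalf : 1/2 < b := by
        have h1 : (2:ℝ) ^ (-1:ℝ) < 2 ^ (-κ) :=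
          Real.rpow_lt_rpow_of_exponent_lt one_lt_two (by linarith)
        rwa [Real.rpow_neg_one, show ((2:ℝ))⁻¹ = 1/2 by norm_num] at h1
      set X₀ := (b+1)/2 with hX₀
      have hX₀b : b < X₀ := by rw [hX₀]; linarith
      have hX₀1 : X₀ < 1 := by rw [hX₀]; linarith
      have hX₀h : 1/2 < X₀ := by rw [hX₀]; linarith
      have hX₀0 : 0 < X₀ := by linarith
      have hX₀inv : 1/X₀ < 2^κ := by
        have h1 : 1/X₀ < 1/b := one_div_lt_one_div_of_lt hb0 hX₀b
        have h2 : 1/b = 2^κ := by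
          rw [hb, one_div, ← Real.rpow_neg (by norm_num : (0:ℝ) ≤ 2), neg_neg]
        linarith
      set ε := min ε₂ (X₀ - 1/2) with hε
      have hε0 : 0 < ε := lt_min hε₂0 (by linarith)
      have hεX : ε ≤ X₀ - 1/2 := min_le_right _ _
      have hεε₂ : ε ≤ ε₂ := min_le_left _ _
      set K := Icc (1 - X₀) X₀ \ Ioo (1/2 - ε/2) (1/2 + ε/2) with hK
      have hKsub : K ⊆ Ioo (0:ℝ) 1 :=
        fun x hx => ⟨lt_of_lt_of_le (by linarith) hx.1.1, lt_of_le_of_lt hx.1.2 hX₀1⟩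
      have hKcpt : IsCompact K := isCompact_Icc.diff isOpen_Ioo
      have hKne : K.Nonempty := by
        refine ⟨1/2 + ε/2, ⟨⟨by linarith, by linarith⟩, ?_⟩⟩
        intro hmem
        exact lt_irrefl _ hmem.2
      set r : ℝ → ℝ := fun x => (x ^ (1/(κ-1)) + (1-x) ^ (1/(κ-1))) ^ (κ-1) / (x*(1-x)) with hr
      have hrcont : ContinuousOn r K := by
        apply ContinuousOn.div
        · apply ContinuousOn.rpow_const
          · exact (continuousOn_id.rpow_const fun x hx => Or.inl (hKsub hx).1.ne').add
              ((continuousOn_const.sub continuousOn_id).rpow_const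
                fun x hx => Or.inl (by have h := (hKsub hx).2; exact sub_ne_zero.2 (ne_of_gt h)))
          · intro x hx
            exact Or.inl (ne_of_gt (add_pos (Real.rpow_pos_of_pos (hKsub hx).1 _)
              (Real.rpow_pos_of_pos (by linarith [(hKsub hx).2] : (0:ℝ) < 1 - x) _)))
        · exact continuousOn_id.mul (continuousOn_const.sub continuousOn_id)
        · intro x hx
          exact ne_of_gt (mul_pos (hKsub hx).1 (by linarith [(hKsub hx).2]))
      obtain ⟨x₀, hx₀K, hx₀max⟩ := hKcpt.exists_isMaxOn hKne hrcont
      have hx₀I : x₀ ∈ Ioo (0:ℝ) 1 := hKsub hx₀K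
      have hx₀D : 0 < x₀ * (1 - x₀) := mul_pos hx₀I.1 (by linarith [hx₀I.2])
      have hx₀ne : x₀ ≠ 1/2 := by
        intro h
        exact hx₀K.2 (by rw [h]; exact ⟨by linarith, by linarith⟩)
      have hR : r x₀ < 2^κ := by
        rw [hr]
        simp only
        rw [div_lt_iff₀ hx₀D]
        exact weight_lt hκ hκ1 hx₀I.1 hx₀I.2 hx₀ne
      set B := max (max (M / X₀) (2^κ * ((M+c)/2))) (M * r x₀) with hB
      have hBbound : ∀ t : Ioo (0:ℝ) 1, F t ≤ B := by
        intro t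
        have hs0 : (0:ℝ) < t := t.2.1
        have hs1 : (t:ℝ) < 1 := t.2.2
        have hDt := hD t
        have hIM : I t ≤ M := le_ciSup hBdd t
        have hInn : 0 ≤ I t := hI_nonneg _ t.2
        have hFr : F t = I t * r t := by
          rw [hF, hr]; simp only; rw [div_mul_eq_mul_div, mul_div_assoc]
        have hrnn : 0 ≤ r (t:ℝ) := div_nonneg (Real.rpow_nonneg
          (add_nonneg (Real.rpow_nonneg hs0.le _) (Real.rpow_nonneg (by linarith) _)) _) hDt.le
        by_cases h1 : X₀ ≤ (t:ℝ) ∨ (t:ℝ) ≤ 1 - X₀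
        · -- region 1
          have hrX : r (t:ℝ) ≤ 1/X₀ := by
            rcases h1 with h1 | h1
            · have hg := weight_le_right hκ1 hs0 (by linarith : (0:ℝ) < 1 - (t:ℝ))
              calc r (t:ℝ) ≤ (1 - (t:ℝ)) / ((t:ℝ) * (1 - (t:ℝ))) :=
                    div_le_div_of_nonneg_right hg hDt.le
                  _ = 1/(t:ℝ) := by
                    rw [div_eq_div_iff hDt.ne' (by linarith : (0:ℝ) < (t:ℝ)).ne']; ring
                  _ ≤ 1/X₀ := one_div_le_one_div_of_le hX₀0 h1
            · have hg := weight_le_left hκ1 hs0 (by linarith : (0:ℝ) < 1 - (t:ℝ))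
              calc r (t:ℝ) ≤ (t:ℝ) / ((t:ℝ) * (1 - (t:ℝ))) :=
                    div_le_div_of_nonneg_right hg hDt.le
                _ = 1/(1 - (t:ℝ)) := by
                  rw [div_eq_div_iff hDt.ne' (by linarith : (0:ℝ) < 1 - (t:ℝ)).ne']; ring
                _ ≤ 1/X₀ := one_div_le_one_div_of_le hX₀0 (by linarith)
          calc F t = I t * r t := hFr
            _ ≤ M * (1/X₀) := mul_le_mul hIM hrX hrnn hM0
            _ = M / X₀ := by ring
            _ ≤ B := le_max_of_le_left (le_max_left _ _)
        · push_neg at h1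
          by_cases h2 : (t:ℝ) ∈ Ioo (1/2 - ε/2) (1/2 + ε/2)
          · -- region 2 : near 1/2, use continuity
            have hsball : (t:ℝ) ∈ Metric.ball (1/2:ℝ) ε₂ := by
              rw [Metric.mem_ball, Real.dist_eq, abs_lt]
              constructor
              · have := h2.1; linarith
              · have := h2.2; linarith
            have hIs : I t < (M+c)/2 := hball hsball
            calc F t ≤ 2^κ * I t := hF_le t
              _ ≤ 2^κ * ((M+c)/2) := mul_le_mul_of_nonneg_left hIs.le h2κ.le
              _ ≤ B := le_max_of_le_left (le_max_right _ _)
          · -- region 3 : compact middle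
            have hsK : (t:ℝ) ∈ K := ⟨⟨by linarith [h1.1, h1.2], by linarith [h1.1, h1.2]⟩, h2⟩
            have hrs : r (t:ℝ) ≤ r x₀ := hx₀max hsK
            calc F t = I t * r t := hFr
              _ ≤ M * r x₀ := mul_le_mul hIM hrs hrnn hM0
              _ ≤ B := le_max_right _ _
      have hsupB : (2:ℝ)^κ * M ≤ B := by
        have h1 : (⨆ t, F t) ≤ B := ciSup_le hBbound
        rwa [hsup] at h1
      have hBlt : B < 2^κ * M := by
        apply max_lt (max_lt ?_ ?_) ?_
        · calc M / X₀ = M * (1/X₀) := by ring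
            _ < M * (2^κ) := mul_lt_mul_of_pos_left hX₀inv hM0'
            _ = 2^κ * M := mul_comm _ _
        · exact mul_lt_mul_of_pos_left (by linarith) h2κ
        · calc M * r x₀ < M * (2^κ) := mul_lt_mul_of_pos_left hR hM0'
            _ = 2^κ * M := mul_comm _ _
      linarith
    have hsup_of_Mc : M = c → (⨆ t, F t) = 2^κ * c := by
      intro h
      refine le_antisymm (by rw [← h]; exact hα2_le) ?_
      rw [← hFhalf]
      exact le_ciSup hFBdd ⟨1/2, hhalf⟩
    constructor
    · constructor
      · intro h
        rw [hα1, hα2] at h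
        have hMc : M = c := hMc_of_eq h.symm
        constructor
        · rw [hα1, hMc]
        · rw [hα2, hsup_of_Mc hMc]
      · rintro ⟨h1, h2⟩; rw [h1, h2]
    · intro _
      constructor
      · constructor
        · intro h
          rw [hα1, hα2] at h
          have hMc : M = c := hMc_of_eq h.symm
          rw [hα1, hMc]
        · intro h
          rw [hα1] at h
          have hMc : M = c := hcancel.1 h
          rw [hα1, hα2, hsup_of_Mc hMc, hMc]
      · rw [hα1]; exact hcancel
  · -- κ = 1
    subst hκ1
    have hα2 : alphaBar2 1 I = 2 * c := by rw [alphaBar2]; norm_num; exact hc.symm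
    have h2 : (2:ℝ) ^ (1:ℝ) = 2 := Real.rpow_one 2
    rw [hα1, hα2, h2]
    refine ⟨⟨fun h => ⟨h, rfl⟩, fun h => h.1⟩, fun _ => ⟨Iff.rfl, ?_⟩⟩
    rw [← h2]; exact hcancel
  · -- κ > 1
    set F : Ioo (0:ℝ) 1 → ℝ := fun t => I t / ((t:ℝ) * (1 - (t:ℝ))) *
      ((t : ℝ) ^ (1 / (κ - 1)) + (1 - (t : ℝ)) ^ (1 / (κ - 1))) ^ (κ - 1) with hF
    have hα2 : alphaBar2 κ I = ⨅ t, F t := by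
      rw [alphaBar2, if_neg (by linarith), if_neg (by linarith)]
    have hF_nonneg : ∀ t : Ioo (0:ℝ) 1, 0 ≤ F t := by
      intro t
      have hs0 : (0:ℝ) < t := t.2.1
      have hs1 : (t:ℝ) < 1 := t.2.2
      apply mul_nonneg
      · exact div_nonneg (hI_nonneg _ t.2) (mul_pos hs0 (by linarith)).le
      · exact Real.rpow_nonneg (add_nonneg (Real.rpow_nonneg hs0.le _)
          (Real.rpow_nonneg (by linarith) _)) _
    have hFBddB : BddBelow (Set.range F) := ⟨0, by rintro _ ⟨t, rfl⟩; exact hF_nonneg t⟩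
    have hFhalf : F ⟨1/2, hhalf⟩ = 2^κ * c := by
      show I (1/2) / ((1/2 : ℝ) * (1 - 1/2)) * _ = _
      rw [weight_half (by linarith : κ ≠ 1)]
      rw [← hc]; field_simp
    have hinf_le : (⨅ t, F t) ≤ 2^κ * c := by
      rw [← hFhalf]; exact ciInf_le hFBddB ⟨1/2, hhalf⟩
    have hcle : (2:ℝ)^κ * c ≤ 2^κ * M := mul_le_mul_of_nonneg_left hcM h2κ.le
    constructor
    · constructor
      · intro h
        rw [hα1, hα2] at h
        have h1 : (2:ℝ)^κ * M ≤ 2^κ * c := h.le.trans hinf_le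
        have h2 : (2:ℝ)^κ * M = 2^κ * c := le_antisymm h1 hcle
        exact ⟨by rw [hα1]; exact h2, by rw [hα2, ← h]; exact h2⟩
      · rintro ⟨h1, h2⟩; rw [h1, h2]
    · intro h; linarith
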